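/- For each integer n ≥ 7 there exists a K_3-divisible graph G of order n with |E(G)| = C(n,2) − e(n) that has no K_3-decomposition, where C(n,2) = n(n−1)/2 and e(n) = (3n−9)/2 if n ≡ 1 or 3 (mod 6), e(n) = (3n−7)/2 if n ≡ 5 (mod 6), e(n) = n + 2 if n ≡ 2 or 4 (mod 6), and e(n) = n if n ≡ 0 (mod 6). -/

import Mathlib

/-- A graph is `K_k`-divisible if `k(k-1)/2` divides its number of edges and `k-1`
divides every vertex degree. -/
def KkDivisible {V : Type*} (k : ℕ) (G : SimpleGraph V) : Prop :=
  (k * (k - 1) / 2) ∣ G.edgeSet.ncard ∧ ∀ x : V, (k - 1) ∣ (G.neighborSet x).ncard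

/-- A `K_k`-decomposition of `G`: a set of `k`-cliques of `G` (i.e. subgraphs
isomorphic to `K_k`) such that every edge of `G` lies in exactly one of them. -/
def HasKkDecomposition {V : Type*} (k : ℕ) (G : SimpleGraph V) : Prop :=
  ∃ D : Set (Finset V),
    (∀ A ∈ D, A.card = k ∧ ∀ x ∈ A, ∀ y ∈ A, x ≠ y → G.Adj x y) ∧
    (∀ x y : V, G.Adj x y → ∃! A, A ∈ D ∧ x ∈ A ∧ y ∈ A)

/-- The extremal bound `e(n)` from Corollary 1.4. -/
def eBound (n : ℕ) : ℚ :=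
  if n % 6 = 1 ∨ n % 6 = 3 then (3 * (n : ℚ) - 9) / 2
  else if n % 6 = 5 then (3 * (n : ℚ) - 7) / 2
  else if n % 6 = 0 then (n : ℚ)
  else (n : ℚ) + 2

/-! ### Auxiliary general lemmas -/

section General

variable {n : ℕ}

lemma degree_eq_card (G : SimpleGraph (Fin n)) [DecidableRel G.Adj] (x : Fin n)
    (S : Finset ℕ) (hS : ∀ m ∈ S, m < n)
    (hmem : ∀ j : Fin n, G.Adj x j ↔ (j : ℕ) ∈ S) :
    G.degree x = S.card := by
  have h : G.neighborFinset x = S.attachFin hS := by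
    ext j
    rw [SimpleGraph.mem_neighborFinset, Finset.mem_attachFin, hmem]
  rw [show G.degree x = (G.neighborFinset x).card from rfl, h, Finset.card_attachFin]

lemma deg_compl_add (L : SimpleGraph (Fin n)) [DecidableRel L.Adj] (x : Fin n) :
    Lᶜ.degree x + L.degree x = n - 1 := by
  have h1 := SimpleGraph.degree_lt_card_verts (G := L) x
  rw [SimpleGraph.degree_compl]
  simp only [Fintype.card_fin] at *
  omega

lemma double_count (L : SimpleGraph (Fin n)) [DecidableRel L.Adj] :
    2 * (Lᶜ.edgeFinset.card) + 2 * (L.edgeFinset.card) = n * (n - 1) := by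
  rw [← SimpleGraph.sum_degrees_eq_twice_card_edges, ← SimpleGraph.sum_degrees_eq_twice_card_edges,
    ← Finset.sum_add_distrib]
  rw [Finset.sum_congr rfl (fun x _ => deg_compl_add L x), Finset.sum_const,
    Finset.card_univ, Fintype.card_fin, smul_eq_mul]

lemma ncard_edgeSet (G : SimpleGraph (Fin n)) [DecidableRel G.Adj] :
    G.edgeSet.ncard = G.edgeFinset.card := by
  rw [Set.ncard_eq_toFinset_card', SimpleGraph.edgeFinset_card, Set.toFinset_card]

lemma ncard_neighborSet (G : SimpleGraph (Fin n)) [DecidableRel G.Adj] (x : Fin n) :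
    (G.neighborSet x).ncard = G.degree x := by
  rw [Set.ncard_eq_toFinset_card', Set.toFinset_card, SimpleGraph.card_neighborSet_eq_degree]

lemma triangle_third {G : SimpleGraph (Fin n)} {D : Set (Finset (Fin n))}
    (hD1 : ∀ A ∈ D, A.card = 3 ∧ ∀ x ∈ A, ∀ y ∈ A, x ≠ y → G.Adj x y)
    (hD2 : ∀ x y : Fin n, G.Adj x y → ∃! A, A ∈ D ∧ x ∈ A ∧ y ∈ A)
    {x v : Fin n} (hv : G.Adj x v) :
    ∃ t A, A ∈ D ∧ x ∈ A ∧ v ∈ A ∧ t ∈ A ∧ t ≠ x ∧ t ≠ v ∧ G.Adj x t ∧ G.Adj v t := by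
  obtain ⟨A, ⟨hAD, hxA, hvA⟩, -⟩ := hD2 x v hv
  obtain ⟨hcard, hcl⟩ := hD1 A hAD
  have hxv : x ≠ v := G.ne_of_adj hv
  have hvx : v ∈ A.erase x := Finset.mem_erase.mpr ⟨hxv.symm, hvA⟩
  have hc2 : ((A.erase x).erase v).card = 1 := by
    rw [Finset.card_erase_of_mem (Finset.mem_erase.mpr ⟨hxv.symm, hvA⟩),
      Finset.card_erase_of_mem hxA, hcard]
  obtain ⟨t, ht⟩ := Finset.card_eq_one.mp hc2
  have htmem : t ∈ (A.erase x).erase v := by rw [ht]; exact Finset.mem_singleton_self t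
  have htv : t ≠ v := (Finset.mem_erase.mp htmem).1
  have htx : t ≠ x := (Finset.mem_erase.mp (Finset.mem_erase.mp htmem).2).1
  have htA : t ∈ A := Finset.mem_of_mem_erase (Finset.mem_of_mem_erase htmem)
  exact ⟨t, A, hAD, hxA, hvA, htA, htx, htv, hcl x hxA t htA (Ne.symm htx),
    hcl v hvA t htA (Ne.symm htv)⟩

/-- The key certificate of non-decomposability: a vertex `x` whose neighbourhood consists of
vertices `v1 v2 v3 (v4)` that are pairwise non-adjacent, plus at most two further vertices
`s1 s2`.  Each edge `x vᵢ` needs a triangle through `s1` or `s2`, and two of these triangles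
share the edge `x s`. -/
lemma no_decomp (G : SimpleGraph (Fin n)) (x v1 v2 v3 v4 s1 s2 : Fin n)
    (h1 : G.Adj x v1) (h2 : G.Adj x v2) (h3 : G.Adj x v3)
    (hs1 : G.Adj x s1) (hs2 : G.Adj x s2)
    (hv12 : ¬G.Adj v1 v2) (hv13 : ¬G.Adj v1 v3) (hv23 : ¬G.Adj v2 v3)
    (hv14 : ¬G.Adj v1 v4) (hv24 : ¬G.Adj v2 v4) (hv34 : ¬G.Adj v3 v4)
    (hv1s1 : v1 ≠ s1) (hv1s2 : v1 ≠ s2) (hv2s1 : v2 ≠ s1) (hv2s2 : v2 ≠ s2)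
    (hv3s1 : v3 ≠ s1) (hv3s2 : v3 ≠ s2)
    (hd12 : v1 ≠ v2) (hd13 : v1 ≠ v3) (hd23 : v2 ≠ v3)
    (hN : ∀ t, G.Adj x t → t = v1 ∨ t = v2 ∨ t = v3 ∨ t = v4 ∨ t = s1 ∨ t = s2) :
    ¬ HasKkDecomposition 3 G := by
  rintro ⟨D, hD1, hD2⟩
  obtain ⟨t1, A1, hA1D, hxA1, hv1A1, htA1, ht1x, ht1v, hxt1, hvt1⟩ := triangle_third hD1 hD2 h1
  obtain ⟨t2, A2, hA2D, hxA2, hv2A2, htA2, ht2x, ht2v, hxt2, hvt2⟩ := triangle_third hD1 hD2 h2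
  obtain ⟨t3, A3, hA3D, hxA3, hv3A3, htA3, ht3x, ht3v, hxt3, hvt3⟩ := triangle_third hD1 hD2 h3
  have hax1 : v1 ≠ x := (G.ne_of_adj h1).symm
  have hax2 : v2 ≠ x := (G.ne_of_adj h2).symm
  have hax3 : v3 ≠ x := (G.ne_of_adj h3).symm
  have hc1 : t1 = s1 ∨ t1 = s2 := by
    rcases hN t1 hxt1 with h|h|h|h|h|h
    · exact absurd h ht1v
    · rw [h] at hvt1; exact absurd hvt1 hv12
    · rw [h] at hvt1; exact absurd hvt1 hv13
    · rw [h] at hvt1; exact absurd hvt1 hv14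
    · exact Or.inl h
    · exact Or.inr h
  have hc2 : t2 = s1 ∨ t2 = s2 := by
    rcases hN t2 hxt2 with h|h|h|h|h|h
    · rw [h] at hvt2; exact absurd (G.adj_symm hvt2) hv12
    · exact absurd h ht2v
    · rw [h] at hvt2; exact absurd hvt2 hv23
    · rw [h] at hvt2; exact absurd hvt2 hv24
    · exact Or.inl h
    · exact Or.inr h
  have hc3 : t3 = s1 ∨ t3 = s2 := by
    rcases hN t3 hxt3 with h|h|h|h|h|h
    · rw [h] at hvt3; exact absurd (G.adj_symm hvt3) hv13
    · rw [h] at hvt3; exact absurd (G.adj_symm hvt3) hv23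
    · exact absurd h ht3v
    · rw [h] at hvt3; exact absurd hvt3 hv34
    · exact Or.inl h
    · exact Or.inr h
  have final : ∀ (va vb t : Fin n) (Aa Ab : Finset (Fin n)), Aa ∈ D → Ab ∈ D →
      x ∈ Aa → va ∈ Aa → t ∈ Aa → x ∈ Ab → vb ∈ Ab → t ∈ Ab →
      va ≠ vb → va ≠ t → vb ≠ t → va ≠ x → vb ≠ x → G.Adj x t → False := by
    intro va vb t Aa Ab hAaD hAbD hxAa hvaAa htAa hxAb hvbAb htAb hab hat hbt hax hbx hadj
    obtain ⟨A, -, huniq⟩ := hD2 x t hadj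
    have e1 : Aa = A := huniq Aa ⟨hAaD, hxAa, htAa⟩
    have e2 : Ab = A := huniq Ab ⟨hAbD, hxAb, htAb⟩
    have hvaAb : va ∈ Ab := (e1.trans e2.symm) ▸ hvaAa
    have hsub : ({va, x, vb, t} : Finset (Fin n)) ⊆ Ab := by
      intro z hz
      simp only [Finset.mem_insert, Finset.mem_singleton] at hz
      rcases hz with rfl|rfl|rfl|rfl
      · exact hvaAb
      · exact hxAb
      · exact hvbAb
      · exact htAb
    have m1 : va ∉ ({x, vb, t} : Finset (Fin n)) := by
      simp only [Finset.mem_insert, Finset.mem_singleton]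
      push_neg
      exact ⟨hax, hab, hat⟩
    have m2 : x ∉ ({vb, t} : Finset (Fin n)) := by
      simp only [Finset.mem_insert, Finset.mem_singleton]
      push_neg
      exact ⟨Ne.symm hbx, G.ne_of_adj hadj⟩
    have m3 : vb ∉ ({t} : Finset (Fin n)) := by
      simp only [Finset.mem_singleton]
      exact hbt
    have hc4 : ({va, x, vb, t} : Finset (Fin n)).card = 4 := by
      rw [Finset.card_insert_of_notMem m1, Finset.card_insert_of_notMem m2,
        Finset.card_insert_of_notMem m3, Finset.card_singleton]
    have hle := Finset.card_le_card hsub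
    have hcb := (hD1 Ab hAbD).1
    omega
  rcases hc1 with rfl|rfl <;> rcases hc2 with rfl|rfl <;> rcases hc3 with rfl|rfl
  all_goals first
    | exact final v1 v2 _ A1 A2 hA1D hA2D hxA1 hv1A1 htA1 hxA2 hv2A2 htA2 hd12
        (by assumption) (by assumption) hax1 hax2 (by assumption)
    | exact final v1 v3 _ A1 A3 hA1D hA3D hxA1 hv1A1 htA1 hxA3 hv3A3 htA3 hd13
        (by assumption) (by assumption) hax1 hax3 (by assumption)
    | exact final v2 v3 _ A2 A3 hA2D hA3D hxA2 hv2A2 htA2 hxA3 hv3A3 htA3 hd23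
        (by assumption) (by assumption) hax2 hax3 (by assumption)

end General

/-! ### Case `n % 6 = 1` or `n % 6 = 3` -/

section Case13

/-- The "leave" relation: star at `0` to all of `{5,…,n-1}`, a triangle on `{1,2,3}`,
and a perfect matching `(5,6),(7,8),…` on `{5,…,n-1}`. -/
def R13 (i j : ℕ) : Prop :=
  (i = 0 ∧ 5 ≤ j) ∨ (j = 0 ∧ 5 ≤ i) ∨
  (1 ≤ i ∧ i ≤ 3 ∧ 1 ≤ j ∧ j ≤ 3) ∨
  (5 ≤ i ∧ 5 ≤ j ∧ ((j = i + 1 ∧ i % 2 = 1) ∨ (i = j + 1 ∧ j % 2 = 1)))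

instance : ∀ i j, Decidable (R13 i j) := fun i j => by unfold R13; infer_instance

def L13 (n : ℕ) : SimpleGraph (Fin n) where
  Adj x y := x ≠ y ∧ R13 x.val y.val
  symm := by
    constructor
    rintro x y ⟨h1, h2⟩
    refine ⟨h1.symm, ?_⟩
    unfold R13 at *
    omega
  loopless := ⟨fun x h => h.1 rfl⟩

instance (n : ℕ) : DecidableRel (L13 n).Adj := fun x y => by
  change Decidable (x ≠ y ∧ R13 x.val y.val)
  infer_instance

def d13 (n m : ℕ) : ℕ := if m = 0 then n - 5 else if m = 4 then 0 else 2

lemma hdeg13 {n : ℕ} (hn : 7 ≤ n) (hodd : n % 2 = 1) (x : Fin n) :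
    (L13 n).degree x = d13 n x.val := by
  have hxlt := x.isLt
  by_cases h0 : x.val = 0
  · rw [degree_eq_card _ x (Finset.Ico 5 n) (fun m hm => (Finset.mem_Ico.mp hm).2) ?_]
    · simp only [d13, h0, if_pos]
      rw [Nat.card_Ico]
    · intro j
      have hjlt := j.isLt
      change (¬x = j ∧ R13 x.val j.val) ↔ _
      simp only [Fin.ext_iff, Finset.mem_Ico]
      unfold R13
      omega
  · by_cases h4 : x.val = 4
    · rw [degree_eq_card _ x (∅ : Finset ℕ) (by simp) ?_]
      · simp [d13, h4]
      · intro j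
        have hjlt := j.isLt
        change (¬x = j ∧ R13 x.val j.val) ↔ _
        simp only [Fin.ext_iff, Finset.notMem_empty, iff_false]
        unfold R13
        omega
    · by_cases h3 : x.val ≤ 3
      · have hmemx : x.val ∈ ({1, 2, 3} : Finset ℕ) := by
          simp only [Finset.mem_insert, Finset.mem_singleton]
          omega
        have hSlt : ∀ m ∈ ({1, 2, 3} : Finset ℕ).erase x.val, m < n := by
          intro m hm
          simp only [Finset.mem_erase, Finset.mem_insert, Finset.mem_singleton] at hm
          omega
        rw [degree_eq_card _ x (({1, 2, 3} : Finset ℕ).erase x.val) hSlt ?_]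
        · rw [Finset.card_erase_of_mem hmemx]
          simp only [d13]
          rw [if_neg h0, if_neg h4]
          rfl
        · intro j
          have hjlt := j.isLt
          change (¬x = j ∧ R13 x.val j.val) ↔ _
          simp only [Fin.ext_iff, Finset.mem_erase, Finset.mem_insert, Finset.mem_singleton]
          unfold R13
          omega
      · -- leaf: 5 ≤ x.val
        have h5 : 5 ≤ x.val := by omega
        by_cases hpar : x.val % 2 = 1
        · rw [degree_eq_card _ x ({0, x.val + 1} : Finset ℕ)
            (fun m hm => by simp only [Finset.mem_insert, Finset.mem_singleton] at hm; omega) ?_]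
          · rw [Finset.card_insert_of_notMem (by simp only [Finset.mem_singleton]; omega),
              Finset.card_singleton]
            simp only [d13]
            rw [if_neg h0, if_neg h4]
          · intro j
            have hjlt := j.isLt
            change (¬x = j ∧ R13 x.val j.val) ↔ _
            simp only [Fin.ext_iff, Finset.mem_insert, Finset.mem_singleton]
            unfold R13
            omega
        · rw [degree_eq_card _ x ({0, x.val - 1} : Finset ℕ)
            (fun m hm => by simp only [Finset.mem_insert, Finset.mem_singleton] at hm; omega) ?_]
          · rw [Finset.card_insert_of_notMem (by simp only [Finset.mem_singleton]; omega),
              Finset.card_singleton]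
            simp only [d13]
            rw [if_neg h0, if_neg h4]
          · intro j
            have hjlt := j.isLt
            change (¬x = j ∧ R13 x.val j.val) ↔ _
            simp only [Fin.ext_iff, Finset.mem_insert, Finset.mem_singleton]
            unfold R13
            omega

lemma sum_d13 {n : ℕ} (hn : 7 ≤ n) : (∑ m ∈ Finset.range n, d13 n m) + 9 = 3 * n := by
  have hsplit : ∑ m ∈ Finset.range n, d13 n m =
      (∑ m ∈ Finset.Ico 0 5, d13 n m) + ∑ m ∈ Finset.Ico 5 n, d13 n m := by
    rw [Finset.sum_Ico_consecutive _ (by omega) (by omega), Finset.range_eq_Ico]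
  have h1 : ∑ m ∈ Finset.Ico 0 5, d13 n m = (n - 5) + 6 := by
    rw [show Finset.Ico 0 5 = Finset.range 5 from (Finset.range_eq_Ico 5).symm]
    simp [Finset.sum_range_succ, d13]
  have h2 : ∀ m ∈ Finset.Ico 5 n, d13 n m = 2 := by
    intro m hm
    simp only [Finset.mem_Ico] at hm
    simp only [d13]
    rw [if_neg (by omega), if_neg (by omega)]
  rw [hsplit, Finset.sum_congr rfl h2, Finset.sum_const, Nat.card_Ico, smul_eq_mul, h1]
  omega

lemma edge13 {n : ℕ} (hn : 7 ≤ n) (hodd : n % 2 = 1) :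
    2 * ((L13 n)ᶜ.edgeFinset.card) + 3 * n = n * (n - 1) + 9 := by
  have hd := SimpleGraph.sum_degrees_eq_twice_card_edges (L13 n)
  have hsum : ∑ v : Fin n, (L13 n).degree v = ∑ m ∈ Finset.range n, d13 n m := by
    rw [Finset.sum_congr rfl (fun x _ => hdeg13 hn hodd x)]
    exact Fin.sum_univ_eq_sum_range (d13 n) n
  have hS := sum_d13 (n := n) hn
  have hdc := double_count (L13 n)
  omega

end Case13

section Assembly13

theorem case13 {n : ℕ} (hn : 7 ≤ n) (h6 : n % 6 = 1 ∨ n % 6 = 3) :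
    ∃ G : SimpleGraph (Fin n), KkDivisible 3 G ∧
      ((G.edgeSet.ncard : ℚ) = (n : ℚ) * ((n : ℚ) - 1) / 2 - eBound n) ∧
      ¬ HasKkDecomposition 3 G := by
  have hodd : n % 2 = 1 := by omega
  have hE := edge13 hn hodd
  have hEn : (L13 n)ᶜ.edgeSet.ncard = (L13 n)ᶜ.edgeFinset.card := ncard_edgeSet _
  refine ⟨(L13 n)ᶜ, ⟨?_, ?_⟩, ?_, ?_⟩
  · -- 3 ∣ number of edges
    show (3 * (3 - 1) / 2 : ℕ) ∣ _
    rw [hEn]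
    rcases h6 with h1 | h3
    · obtain ⟨k, hk⟩ : ∃ k, n = 6 * k + 1 := ⟨n / 6, by omega⟩
      have hnn : n * (n - 1) = 6 * (n * k) := by
        have h2 : n - 1 = 6 * k := by omega
        rw [h2]; ring
      omega
    · obtain ⟨k, hk⟩ : ∃ k, n = 6 * k + 3 := ⟨n / 6, by omega⟩
      have hnn : n * (n - 1) = 6 * ((2 * k + 1) * (3 * k + 1)) := by
        have h2 : n - 1 = 2 * (3 * k + 1) := by omega
        rw [h2, hk]; ring
      omega
  · -- all degrees even
    intro x
    show (3 - 1 : ℕ) ∣ _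
    rw [ncard_neighborSet]
    have hda := deg_compl_add (L13 n) x
    have hld := hdeg13 hn hodd x
    have hv : d13 n x.val = n - 5 ∨ d13 n x.val = 0 ∨ d13 n x.val = 2 := by
      unfold d13; split_ifs <;> tauto
    omega
  · -- edge count
    rw [hEn]
    have hcast := congrArg (Nat.cast (R := ℚ)) hE
    push_cast [Nat.cast_sub (show 1 ≤ n by omega)] at hcast
    rw [eBound, if_pos h6]
    linarith
  · -- non-decomposable
    have h7 : (7 : ℕ) ≤ n := hn
    have hr01 : ¬ R13 0 1 := by decide
    have hr02 : ¬ R13 0 2 := by decide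
    have hr03 : ¬ R13 0 3 := by decide
    have hr04 : ¬ R13 0 4 := by decide
    refine no_decomp _ ⟨0, by omega⟩ ⟨1, by omega⟩ ⟨2, by omega⟩ ⟨3, by omega⟩ ⟨1, by omega⟩
      ⟨4, by omega⟩ ⟨4, by omega⟩ ?_ ?_ ?_ ?_ ?_ ?_ ?_ ?_ ?_ ?_ ?_ ?_ ?_ ?_ ?_ ?_ ?_ ?_ ?_ ?_ ?_
    -- G.Adj 0 1, 0 2, 0 3, 0 4, 0 4
    · exact (SimpleGraph.compl_adj _ _ _).mpr
        ⟨Fin.ne_of_val_ne (by norm_num), fun h => hr01 h.2⟩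
    · exact (SimpleGraph.compl_adj _ _ _).mpr
        ⟨Fin.ne_of_val_ne (by norm_num), fun h => hr02 h.2⟩
    · exact (SimpleGraph.compl_adj _ _ _).mpr
        ⟨Fin.ne_of_val_ne (by norm_num), fun h => hr03 h.2⟩
    · exact (SimpleGraph.compl_adj _ _ _).mpr
        ⟨Fin.ne_of_val_ne (by norm_num), fun h => hr04 h.2⟩
    · exact (SimpleGraph.compl_adj _ _ _).mpr
        ⟨Fin.ne_of_val_ne (by norm_num), fun h => hr04 h.2⟩
    -- ¬ G.Adj among v's
    · intro h
      rw [SimpleGraph.compl_adj] at h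
      exact h.2 ⟨h.1, (by decide : R13 1 2)⟩
    · intro h
      rw [SimpleGraph.compl_adj] at h
      exact h.2 ⟨h.1, (by decide : R13 1 3)⟩
    · intro h
      rw [SimpleGraph.compl_adj] at h
      exact h.2 ⟨h.1, (by decide : R13 2 3)⟩
    · intro h
      rw [SimpleGraph.compl_adj] at h
      exact h.2 ⟨h.1, (by decide : R13 1 1)⟩
    · intro h
      rw [SimpleGraph.compl_adj] at h
      exact h.2 ⟨h.1, (by decide : R13 2 1)⟩
    · intro h
      rw [SimpleGraph.compl_adj] at h
      exact h.2 ⟨h.1, (by decide : R13 3 1)⟩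
    -- v ≠ s
    · exact Fin.ne_of_val_ne (by norm_num)
    · exact Fin.ne_of_val_ne (by norm_num)
    · exact Fin.ne_of_val_ne (by norm_num)
    · exact Fin.ne_of_val_ne (by norm_num)
    · exact Fin.ne_of_val_ne (by norm_num)
    · exact Fin.ne_of_val_ne (by norm_num)
    -- v distinct
    · exact Fin.ne_of_val_ne (by norm_num)
    · exact Fin.ne_of_val_ne (by norm_num)
    · exact Fin.ne_of_val_ne (by norm_num)
    -- hN
    · intro t ht
      rw [SimpleGraph.compl_adj] at ht
      obtain ⟨hne, hnadj⟩ := ht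
      have htlt := t.isLt
      have ht0 : t.val ≠ 0 := fun h0 => hne (Fin.ext (by simpa using h0.symm))
      have hval : t.val = 1 ∨ t.val = 2 ∨ t.val = 3 ∨ t.val = 4 := by
        by_contra hcon
        exact hnadj ⟨hne, Or.inl ⟨rfl, by omega⟩⟩
      rcases hval with h | h | h | h
      · exact Or.inl (Fin.ext (by simpa using h.symm)).symm
      · exact Or.inr (Or.inl (Fin.ext (by simpa using h.symm)).symm)
      · exact Or.inr (Or.inr (Or.inl (Fin.ext (by simpa using h.symm)).symm))
      · exact Or.inr (Or.inr (Or.inr (Or.inr (Or.inl (Fin.ext (by simpa using h.symm)).symm))))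

end Assembly13

/-! ### Case `n % 6 = 5` -/

section Case5

def R5 (i j : ℕ) : Prop :=
  (i = 0 ∧ 5 ≤ j) ∨ (j = 0 ∧ 5 ≤ i) ∨
  (1 ≤ i ∧ i ≤ 3 ∧ 1 ≤ j ∧ j ≤ 3) ∨
  (i = 4 ∧ (j = 5 ∨ j = 6)) ∨ (j = 4 ∧ (i = 5 ∨ i = 6)) ∨
  (7 ≤ i ∧ 7 ≤ j ∧ ((j = i + 1 ∧ i % 2 = 1) ∨ (i = j + 1 ∧ j % 2 = 1)))

instance : ∀ i j, Decidable (R5 i j) := fun i j => by unfold R5; infer_instance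

set_option maxHeartbeats 1000000 in
def L5 (n : ℕ) : SimpleGraph (Fin n) where
  Adj x y := x ≠ y ∧ R5 x.val y.val
  symm := by
    constructor
    rintro x y ⟨h1, h2⟩
    refine ⟨h1.symm, ?_⟩
    unfold R5 at h2 ⊢
    omega
  loopless := ⟨fun x h => h.1 rfl⟩

instance (n : ℕ) : DecidableRel (L5 n).Adj := fun x y => by
  change Decidable (x ≠ y ∧ R5 x.val y.val)
  infer_instance

def d5 (n m : ℕ) : ℕ := if m = 0 then n - 5 else 2

lemma hdeg5 {n : ℕ} (hn : 7 ≤ n) (hodd : n % 2 = 1) (x : Fin n) :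
    (L5 n).degree x = d5 n x.val := by
  have hxlt := x.isLt
  by_cases h0 : x.val = 0
  · rw [degree_eq_card _ x (Finset.Ico 5 n) (fun m hm => (Finset.mem_Ico.mp hm).2) ?_]
    · simp only [d5, h0, if_pos]
      rw [Nat.card_Ico]
    · intro j
      have hjlt := j.isLt
      change (¬x = j ∧ R5 x.val j.val) ↔ _
      simp only [Fin.ext_iff, Finset.mem_Ico]
      unfold R5
      omega
  · by_cases h3 : x.val ≤ 3
    · have hmemx : x.val ∈ ({1, 2, 3} : Finset ℕ) := by
        simp only [Finset.mem_insert, Finset.mem_singleton]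
        omega
      have hSlt : ∀ m ∈ ({1, 2, 3} : Finset ℕ).erase x.val, m < n := by
        intro m hm
        simp only [Finset.mem_erase, Finset.mem_insert, Finset.mem_singleton] at hm
        omega
      rw [degree_eq_card _ x (({1, 2, 3} : Finset ℕ).erase x.val) hSlt ?_]
      · rw [Finset.card_erase_of_mem hmemx]
        simp only [d5]
        rw [if_neg h0]
        rfl
      · intro j
        have hjlt := j.isLt
        change (¬x = j ∧ R5 x.val j.val) ↔ _
        simp only [Fin.ext_iff, Finset.mem_erase, Finset.mem_insert, Finset.mem_singleton]
        unfold R5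
        omega
    · by_cases h4 : x.val = 4
      · rw [degree_eq_card _ x ({5, 6} : Finset ℕ)
          (fun m hm => by simp only [Finset.mem_insert, Finset.mem_singleton] at hm; omega) ?_]
        · rw [Finset.card_insert_of_notMem (by simp), Finset.card_singleton]
          simp only [d5]
          rw [if_neg h0]
        · intro j
          have hjlt := j.isLt
          change (¬x = j ∧ R5 x.val j.val) ↔ _
          simp only [Fin.ext_iff, Finset.mem_insert, Finset.mem_singleton]
          unfold R5
          omega
      · by_cases h56 : x.val ≤ 6
        · rw [degree_eq_card _ x ({0, 4} : Finset ℕ)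
            (fun m hm => by simp only [Finset.mem_insert, Finset.mem_singleton] at hm; omega) ?_]
          · rw [Finset.card_insert_of_notMem (by simp), Finset.card_singleton]
            simp only [d5]
            rw [if_neg h0]
          · intro j
            have hjlt := j.isLt
            change (¬x = j ∧ R5 x.val j.val) ↔ _
            simp only [Fin.ext_iff, Finset.mem_insert, Finset.mem_singleton]
            unfold R5
            omega
        · have h7 : 7 ≤ x.val := by omega
          by_cases hpar : x.val % 2 = 1
          · rw [degree_eq_card _ x ({0, x.val + 1} : Finset ℕ)
              (fun m hm => by simp only [Finset.mem_insert, Finset.mem_singleton] at hm; omega) ?_]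
            · rw [Finset.card_insert_of_notMem (by simp only [Finset.mem_singleton]; omega),
                Finset.card_singleton]
              simp only [d5]
              rw [if_neg h0]
            · intro j
              have hjlt := j.isLt
              change (¬x = j ∧ R5 x.val j.val) ↔ _
              simp only [Fin.ext_iff, Finset.mem_insert, Finset.mem_singleton]
              unfold R5
              omega
          · rw [degree_eq_card _ x ({0, x.val - 1} : Finset ℕ)
              (fun m hm => by simp only [Finset.mem_insert, Finset.mem_singleton] at hm; omega) ?_]
            · rw [Finset.card_insert_of_notMem (by simp only [Finset.mem_singleton]; omega),
                Finset.card_singleton]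
              simp only [d5]
              rw [if_neg h0]
            · intro j
              have hjlt := j.isLt
              change (¬x = j ∧ R5 x.val j.val) ↔ _
              simp only [Fin.ext_iff, Finset.mem_insert, Finset.mem_singleton]
              unfold R5
              omega

lemma sum_d5 {n : ℕ} (hn : 7 ≤ n) : (∑ m ∈ Finset.range n, d5 n m) + 7 = 3 * n := by
  have hsplit : ∑ m ∈ Finset.range n, d5 n m =
      (∑ m ∈ Finset.Ico 0 5, d5 n m) + ∑ m ∈ Finset.Ico 5 n, d5 n m := by
    rw [Finset.sum_Ico_consecutive _ (by omega) (by omega), Finset.range_eq_Ico]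
  have h1 : ∑ m ∈ Finset.Ico 0 5, d5 n m = (n - 5) + 8 := by
    rw [show Finset.Ico 0 5 = Finset.range 5 from (Finset.range_eq_Ico 5).symm]
    simp [Finset.sum_range_succ, d5]
  have h2 : ∀ m ∈ Finset.Ico 5 n, d5 n m = 2 := by
    intro m hm
    simp only [Finset.mem_Ico] at hm
    simp only [d5]
    rw [if_neg (by omega)]
  rw [hsplit, Finset.sum_congr rfl h2, Finset.sum_const, Nat.card_Ico, smul_eq_mul, h1]
  omega

lemma edge5 {n : ℕ} (hn : 7 ≤ n) (hodd : n % 2 = 1) :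
    2 * ((L5 n)ᶜ.edgeFinset.card) + 3 * n = n * (n - 1) + 7 := by
  have hd := SimpleGraph.sum_degrees_eq_twice_card_edges (L5 n)
  have hsum : ∑ v : Fin n, (L5 n).degree v = ∑ m ∈ Finset.range n, d5 n m := by
    rw [Finset.sum_congr rfl (fun x _ => hdeg5 hn hodd x)]
    exact Fin.sum_univ_eq_sum_range (d5 n) n
  have hS := sum_d5 (n := n) hn
  have hdc := double_count (L5 n)
  omega

theorem case5 {n : ℕ} (hn : 7 ≤ n) (h6 : n % 6 = 5) :
    ∃ G : SimpleGraph (Fin n), KkDivisible 3 G ∧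
      ((G.edgeSet.ncard : ℚ) = (n : ℚ) * ((n : ℚ) - 1) / 2 - eBound n) ∧
      ¬ HasKkDecomposition 3 G := by
  have hodd : n % 2 = 1 := by omega
  have hE := edge5 hn hodd
  have hEn : (L5 n)ᶜ.edgeSet.ncard = (L5 n)ᶜ.edgeFinset.card := ncard_edgeSet _
  refine ⟨(L5 n)ᶜ, ⟨?_, ?_⟩, ?_, ?_⟩
  · show (3 * (3 - 1) / 2 : ℕ) ∣ _
    rw [hEn]
    obtain ⟨k, hk⟩ : ∃ k, n = 6 * k + 5 := ⟨n / 6, by omega⟩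
    have hnn : n * (n - 1) = 6 * (6 * k * k + 9 * k + 3) + 2 := by
      have h2 : n - 1 = 6 * k + 4 := by omega
      rw [h2, hk]; ring
    omega
  · intro x
    show (3 - 1 : ℕ) ∣ _
    rw [ncard_neighborSet]
    have hda := deg_compl_add (L5 n) x
    have hld := hdeg5 hn hodd x
    have hv : d5 n x.val = n - 5 ∨ d5 n x.val = 2 := by
      unfold d5; split_ifs <;> tauto
    omega
  · rw [hEn]
    have hcast := congrArg (Nat.cast (R := ℚ)) hE
    push_cast [Nat.cast_sub (show 1 ≤ n by omega)] at hcast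
    rw [eBound, if_neg (by omega), if_pos h6]
    linarith
  · have h7 : (7 : ℕ) ≤ n := hn
    have hr01 : ¬ R5 0 1 := by decide
    have hr02 : ¬ R5 0 2 := by decide
    have hr03 : ¬ R5 0 3 := by decide
    have hr04 : ¬ R5 0 4 := by decide
    refine no_decomp _ ⟨0, by omega⟩ ⟨1, by omega⟩ ⟨2, by omega⟩ ⟨3, by omega⟩ ⟨1, by omega⟩
      ⟨4, by omega⟩ ⟨4, by omega⟩ ?_ ?_ ?_ ?_ ?_ ?_ ?_ ?_ ?_ ?_ ?_ ?_ ?_ ?_ ?_ ?_ ?_ ?_ ?_ ?_ ?_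
    · exact (SimpleGraph.compl_adj _ _ _).mpr
        ⟨Fin.ne_of_val_ne (by norm_num), fun h => hr01 h.2⟩
    · exact (SimpleGraph.compl_adj _ _ _).mpr
        ⟨Fin.ne_of_val_ne (by norm_num), fun h => hr02 h.2⟩
    · exact (SimpleGraph.compl_adj _ _ _).mpr
        ⟨Fin.ne_of_val_ne (by norm_num), fun h => hr03 h.2⟩
    · exact (SimpleGraph.compl_adj _ _ _).mpr
        ⟨Fin.ne_of_val_ne (by norm_num), fun h => hr04 h.2⟩
    · exact (SimpleGraph.compl_adj _ _ _).mpr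
        ⟨Fin.ne_of_val_ne (by norm_num), fun h => hr04 h.2⟩
    · intro h
      rw [SimpleGraph.compl_adj] at h
      exact h.2 ⟨h.1, (by decide : R5 1 2)⟩
    · intro h
      rw [SimpleGraph.compl_adj] at h
      exact h.2 ⟨h.1, (by decide : R5 1 3)⟩
    · intro h
      rw [SimpleGraph.compl_adj] at h
      exact h.2 ⟨h.1, (by decide : R5 2 3)⟩
    · intro h
      rw [SimpleGraph.compl_adj] at h
      exact h.2 ⟨h.1, (by decide : R5 1 1)⟩
    · intro h
      rw [SimpleGraph.compl_adj] at h
      exact h.2 ⟨h.1, (by decide : R5 2 1)⟩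
    · intro h
      rw [SimpleGraph.compl_adj] at h
      exact h.2 ⟨h.1, (by decide : R5 3 1)⟩
    · exact Fin.ne_of_val_ne (by norm_num)
    · exact Fin.ne_of_val_ne (by norm_num)
    · exact Fin.ne_of_val_ne (by norm_num)
    · exact Fin.ne_of_val_ne (by norm_num)
    · exact Fin.ne_of_val_ne (by norm_num)
    · exact Fin.ne_of_val_ne (by norm_num)
    · exact Fin.ne_of_val_ne (by norm_num)
    · exact Fin.ne_of_val_ne (by norm_num)
    · exact Fin.ne_of_val_ne (by norm_num)
    · intro t ht
      rw [SimpleGraph.compl_adj] at ht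
      obtain ⟨hne, hnadj⟩ := ht
      have htlt := t.isLt
      have ht0 : t.val ≠ 0 := fun h0 => hne (Fin.ext (by simpa using h0.symm))
      have hval : t.val = 1 ∨ t.val = 2 ∨ t.val = 3 ∨ t.val = 4 := by
        by_contra hcon
        exact hnadj ⟨hne, Or.inl ⟨rfl, by omega⟩⟩
      rcases hval with h | h | h | h
      · exact Or.inl (Fin.ext (by simpa using h.symm)).symm
      · exact Or.inr (Or.inl (Fin.ext (by simpa using h.symm)).symm)
      · exact Or.inr (Or.inr (Or.inl (Fin.ext (by simpa using h.symm)).symm))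
      · exact Or.inr (Or.inr (Or.inr (Or.inr (Or.inl (Fin.ext (by simpa using h.symm)).symm))))

end Case5

/-! ### Case `n % 6 = 2` or `n % 6 = 4` -/

section Case24

def R24 (i j : ℕ) : Prop :=
  (i = 0 ∧ 5 ≤ j) ∨ (j = 0 ∧ 5 ≤ i) ∨
  (1 ≤ i ∧ i ≤ 3 ∧ 1 ≤ j ∧ j ≤ 3) ∨
  ((i = 1 ∨ i = 2) ∧ j = 5) ∨ ((j = 1 ∨ j = 2) ∧ i = 5) ∨
  ((i = 3 ∨ i = 4) ∧ j = 6) ∨ ((j = 3 ∨ j = 4) ∧ i = 6)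

instance : ∀ i j, Decidable (R24 i j) := fun i j => by unfold R24; infer_instance

set_option maxHeartbeats 1000000 in
def L24 (n : ℕ) : SimpleGraph (Fin n) where
  Adj x y := x ≠ y ∧ R24 x.val y.val
  symm := by
    constructor
    rintro x y ⟨h1, h2⟩
    refine ⟨h1.symm, ?_⟩
    unfold R24 at h2 ⊢
    omega
  loopless := ⟨fun x h => h.1 rfl⟩

instance (n : ℕ) : DecidableRel (L24 n).Adj := fun x y => by
  change Decidable (x ≠ y ∧ R24 x.val y.val)
  infer_instance

def d24 (n m : ℕ) : ℕ :=
  if m = 0 then n - 5 else if m = 4 then 1 else if m ≤ 6 then 3 else 1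

lemma hdeg24 {n : ℕ} (hn : 8 ≤ n) (x : Fin n) :
    (L24 n).degree x = d24 n x.val := by
  have hxlt := x.isLt
  have hcard2 : ∀ a b : ℕ, a ≠ b → ({a, b} : Finset ℕ).card = 2 := by
    intro a b hab
    rw [Finset.card_insert_of_notMem (by simp [hab]), Finset.card_singleton]
  have hcard3 : ∀ a b c : ℕ, a ≠ b → a ≠ c → b ≠ c → ({a, b, c} : Finset ℕ).card = 3 := by
    intro a b c hab hac hbc
    rw [Finset.card_insert_of_notMem (by simp [hab, hac]),
      Finset.card_insert_of_notMem (by simp [hbc]), Finset.card_singleton]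
  by_cases h0 : x.val = 0
  · rw [degree_eq_card _ x (Finset.Ico 5 n) (fun m hm => (Finset.mem_Ico.mp hm).2) ?_]
    · simp only [d24, h0, if_pos]
      rw [Nat.card_Ico]
    · intro j
      have hjlt := j.isLt
      change (¬x = j ∧ R24 x.val j.val) ↔ _
      simp only [Fin.ext_iff, Finset.mem_Ico]
      unfold R24
      omega
  · by_cases h1 : x.val = 1
    · rw [degree_eq_card _ x ({2, 3, 5} : Finset ℕ)
        (fun m hm => by simp only [Finset.mem_insert, Finset.mem_singleton] at hm; omega) ?_]
      · rw [hcard3 2 3 5 (by norm_num) (by norm_num) (by norm_num)]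
        simp only [d24]
        rw [if_neg h0, if_neg (by omega), if_pos (by omega)]
      · intro j
        have hjlt := j.isLt
        change (¬x = j ∧ R24 x.val j.val) ↔ _
        simp only [Fin.ext_iff, Finset.mem_insert, Finset.mem_singleton]
        unfold R24
        omega
    · by_cases h2 : x.val = 2
      · rw [degree_eq_card _ x ({1, 3, 5} : Finset ℕ)
          (fun m hm => by simp only [Finset.mem_insert, Finset.mem_singleton] at hm; omega) ?_]
        · rw [hcard3 1 3 5 (by norm_num) (by norm_num) (by norm_num)]
          simp only [d24]
          rw [if_neg h0, if_neg (by omega), if_pos (by omega)]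
        · intro j
          have hjlt := j.isLt
          change (¬x = j ∧ R24 x.val j.val) ↔ _
          simp only [Fin.ext_iff, Finset.mem_insert, Finset.mem_singleton]
          unfold R24
          omega
      · by_cases h3 : x.val = 3
        · rw [degree_eq_card _ x ({1, 2, 6} : Finset ℕ)
            (fun m hm => by simp only [Finset.mem_insert, Finset.mem_singleton] at hm; omega) ?_]
          · rw [hcard3 1 2 6 (by norm_num) (by norm_num) (by norm_num)]
            simp only [d24]
            rw [if_neg h0, if_neg (by omega), if_pos (by omega)]
          · intro j
            have hjlt := j.isLt
            change (¬x = j ∧ R24 x.val j.val) ↔ _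
            simp only [Fin.ext_iff, Finset.mem_insert, Finset.mem_singleton]
            unfold R24
            omega
        · by_cases h4 : x.val = 4
          · rw [degree_eq_card _ x ({6} : Finset ℕ) (fun m hm => by
              simp only [Finset.mem_singleton] at hm; omega) ?_]
            · rw [Finset.card_singleton]
              simp only [d24]
              rw [if_neg h0, if_pos h4]
            · intro j
              have hjlt := j.isLt
              change (¬x = j ∧ R24 x.val j.val) ↔ _
              simp only [Fin.ext_iff, Finset.mem_singleton]
              unfold R24
              omega
          · by_cases h5 : x.val = 5
            · rw [degree_eq_card _ x ({0, 1, 2} : Finset ℕ)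
                (fun m hm => by simp only [Finset.mem_insert, Finset.mem_singleton] at hm; omega) ?_]
              · rw [hcard3 0 1 2 (by norm_num) (by norm_num) (by norm_num)]
                simp only [d24]
                rw [if_neg h0, if_neg (by omega), if_pos (by omega)]
              · intro j
                have hjlt := j.isLt
                change (¬x = j ∧ R24 x.val j.val) ↔ _
                simp only [Fin.ext_iff, Finset.mem_insert, Finset.mem_singleton]
                unfold R24
                omega
            · by_cases h6 : x.val = 6
              · rw [degree_eq_card _ x ({0, 3, 4} : Finset ℕ)
                  (fun m hm => by simp only [Finset.mem_insert, Finset.mem_singleton] at hm; omega) ?_]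
                · rw [hcard3 0 3 4 (by norm_num) (by norm_num) (by norm_num)]
                  simp only [d24]
                  rw [if_neg h0, if_neg (by omega), if_pos (by omega)]
                · intro j
                  have hjlt := j.isLt
                  change (¬x = j ∧ R24 x.val j.val) ↔ _
                  simp only [Fin.ext_iff, Finset.mem_insert, Finset.mem_singleton]
                  unfold R24
                  omega
              · have h7 : 7 ≤ x.val := by omega
                rw [degree_eq_card _ x ({0} : Finset ℕ) (fun m hm => by
                  simp only [Finset.mem_singleton] at hm; omega) ?_]
                · rw [Finset.card_singleton]
                  simp only [d24]
                  rw [if_neg h0, if_neg h4, if_neg (by omega)]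
                · intro j
                  have hjlt := j.isLt
                  change (¬x = j ∧ R24 x.val j.val) ↔ _
                  simp only [Fin.ext_iff, Finset.mem_singleton]
                  unfold R24
                  omega

lemma sum_d24 {n : ℕ} (hn : 8 ≤ n) : ∑ m ∈ Finset.range n, d24 n m = 2 * n + 4 := by
  have hsplit : ∑ m ∈ Finset.range n, d24 n m =
      (∑ m ∈ Finset.Ico 0 7, d24 n m) + ∑ m ∈ Finset.Ico 7 n, d24 n m := by
    rw [Finset.sum_Ico_consecutive _ (by omega) (by omega), Finset.range_eq_Ico]
  have h1 : ∑ m ∈ Finset.Ico 0 7, d24 n m = (n - 5) + 16 := by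
    rw [show Finset.Ico 0 7 = Finset.range 7 from (Finset.range_eq_Ico 7).symm]
    simp [Finset.sum_range_succ, d24]
  have h2 : ∀ m ∈ Finset.Ico 7 n, d24 n m = 1 := by
    intro m hm
    simp only [Finset.mem_Ico] at hm
    simp only [d24]
    rw [if_neg (by omega), if_neg (by omega), if_neg (by omega)]
  rw [hsplit, Finset.sum_congr rfl h2, Finset.sum_const, Nat.card_Ico, smul_eq_mul, h1]
  omega

lemma edge24 {n : ℕ} (hn : 8 ≤ n) :
    2 * ((L24 n)ᶜ.edgeFinset.card) + 2 * n + 4 = n * (n - 1) := by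
  have hd := SimpleGraph.sum_degrees_eq_twice_card_edges (L24 n)
  have hsum : ∑ v : Fin n, (L24 n).degree v = ∑ m ∈ Finset.range n, d24 n m := by
    rw [Finset.sum_congr rfl (fun x _ => hdeg24 hn x)]
    exact Fin.sum_univ_eq_sum_range (d24 n) n
  have hS := sum_d24 (n := n) hn
  have hdc := double_count (L24 n)
  omega

theorem case24 {n : ℕ} (hn : 7 ≤ n) (h6 : n % 6 = 2 ∨ n % 6 = 4) :
    ∃ G : SimpleGraph (Fin n), KkDivisible 3 G ∧
      ((G.edgeSet.ncard : ℚ) = (n : ℚ) * ((n : ℚ) - 1) / 2 - eBound n) ∧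
      ¬ HasKkDecomposition 3 G := by
  have hn8 : 8 ≤ n := by omega
  have hE := edge24 hn8
  have hEn : (L24 n)ᶜ.edgeSet.ncard = (L24 n)ᶜ.edgeFinset.card := ncard_edgeSet _
  refine ⟨(L24 n)ᶜ, ⟨?_, ?_⟩, ?_, ?_⟩
  · show (3 * (3 - 1) / 2 : ℕ) ∣ _
    rw [hEn]
    rcases h6 with h2 | h4
    · obtain ⟨k, hk⟩ : ∃ k, n = 6 * k + 2 := ⟨n / 6, by omega⟩
      have hnn : n * (n - 1) = 6 * (6 * k * k + 3 * k) + 2 := by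
        have hm : n - 1 = 6 * k + 1 := by omega
        rw [hm, hk]; ring
      omega
    · obtain ⟨k, hk⟩ : ∃ k, n = 6 * k + 4 := ⟨n / 6, by omega⟩
      have hnn : n * (n - 1) = 6 * ((3 * k + 2) * (2 * k + 1)) := by
        have hm : n - 1 = 3 * (2 * k + 1) := by omega
        rw [hm, hk]; ring
      omega
  · intro x
    show (3 - 1 : ℕ) ∣ _
    rw [ncard_neighborSet]
    have hda := deg_compl_add (L24 n) x
    have hld := hdeg24 hn8 x
    have heven : n % 2 = 0 := by omega
    have hv : d24 n x.val = n - 5 ∨ d24 n x.val = 1 ∨ d24 n x.val = 3 := by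
      unfold d24; split_ifs <;> tauto
    omega
  · rw [hEn]
    have hcast := congrArg (Nat.cast (R := ℚ)) hE
    push_cast [Nat.cast_sub (show 1 ≤ n by omega)] at hcast
    rw [eBound, if_neg (by omega), if_neg (by omega), if_neg (by omega)]
    linarith
  · have h7 : (7 : ℕ) ≤ n := hn
    have hr01 : ¬ R24 0 1 := by decide
    have hr02 : ¬ R24 0 2 := by decide
    have hr03 : ¬ R24 0 3 := by decide
    have hr04 : ¬ R24 0 4 := by decide
    refine no_decomp _ ⟨0, by omega⟩ ⟨1, by omega⟩ ⟨2, by omega⟩ ⟨3, by omega⟩ ⟨1, by omega⟩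
      ⟨4, by omega⟩ ⟨4, by omega⟩ ?_ ?_ ?_ ?_ ?_ ?_ ?_ ?_ ?_ ?_ ?_ ?_ ?_ ?_ ?_ ?_ ?_ ?_ ?_ ?_ ?_
    · exact (SimpleGraph.compl_adj _ _ _).mpr
        ⟨Fin.ne_of_val_ne (by norm_num), fun h => hr01 h.2⟩
    · exact (SimpleGraph.compl_adj _ _ _).mpr
        ⟨Fin.ne_of_val_ne (by norm_num), fun h => hr02 h.2⟩
    · exact (SimpleGraph.compl_adj _ _ _).mpr
        ⟨Fin.ne_of_val_ne (by norm_num), fun h => hr03 h.2⟩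
    · exact (SimpleGraph.compl_adj _ _ _).mpr
        ⟨Fin.ne_of_val_ne (by norm_num), fun h => hr04 h.2⟩
    · exact (SimpleGraph.compl_adj _ _ _).mpr
        ⟨Fin.ne_of_val_ne (by norm_num), fun h => hr04 h.2⟩
    · intro h
      rw [SimpleGraph.compl_adj] at h
      exact h.2 ⟨h.1, (by decide : R24 1 2)⟩
    · intro h
      rw [SimpleGraph.compl_adj] at h
      exact h.2 ⟨h.1, (by decide : R24 1 3)⟩
    · intro h
      rw [SimpleGraph.compl_adj] at h
      exact h.2 ⟨h.1, (by decide : R24 2 3)⟩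
    · intro h
      rw [SimpleGraph.compl_adj] at h
      exact h.2 ⟨h.1, (by decide : R24 1 1)⟩
    · intro h
      rw [SimpleGraph.compl_adj] at h
      exact h.2 ⟨h.1, (by decide : R24 2 1)⟩
    · intro h
      rw [SimpleGraph.compl_adj] at h
      exact h.2 ⟨h.1, (by decide : R24 3 1)⟩
    · exact Fin.ne_of_val_ne (by norm_num)
    · exact Fin.ne_of_val_ne (by norm_num)
    · exact Fin.ne_of_val_ne (by norm_num)
    · exact Fin.ne_of_val_ne (by norm_num)
    · exact Fin.ne_of_val_ne (by norm_num)
    · exact Fin.ne_of_val_ne (by norm_num)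
    · exact Fin.ne_of_val_ne (by norm_num)
    · exact Fin.ne_of_val_ne (by norm_num)
    · exact Fin.ne_of_val_ne (by norm_num)
    · intro t ht
      rw [SimpleGraph.compl_adj] at ht
      obtain ⟨hne, hnadj⟩ := ht
      have htlt := t.isLt
      have ht0 : t.val ≠ 0 := fun h0 => hne (Fin.ext (by simpa using h0.symm))
      have hval : t.val = 1 ∨ t.val = 2 ∨ t.val = 3 ∨ t.val = 4 := by
        by_contra hcon
        exact hnadj ⟨hne, Or.inl ⟨rfl, by omega⟩⟩
      rcases hval with h | h | h | h
      · exact Or.inl (Fin.ext (by simpa using h.symm)).symm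
      · exact Or.inr (Or.inl (Fin.ext (by simpa using h.symm)).symm)
      · exact Or.inr (Or.inr (Or.inl (Fin.ext (by simpa using h.symm)).symm))
      · exact Or.inr (Or.inr (Or.inr (Or.inr (Or.inl (Fin.ext (by simpa using h.symm)).symm))))

end Case24

/-! ### Case `n % 6 = 0` -/

section Case0

def R0 (i j : ℕ) : Prop :=
  (i = 0 ∧ 7 ≤ j) ∨ (j = 0 ∧ 7 ≤ i) ∨
  (1 ≤ i ∧ i ≤ 4 ∧ 1 ≤ j ∧ j ≤ 4) ∨
  (i = 5 ∧ j = 6) ∨ (i = 6 ∧ j = 5)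

instance : ∀ i j, Decidable (R0 i j) := fun i j => by unfold R0; infer_instance

set_option maxHeartbeats 1000000 in
def L0 (n : ℕ) : SimpleGraph (Fin n) where
  Adj x y := x ≠ y ∧ R0 x.val y.val
  symm := by
    constructor
    rintro x y ⟨h1, h2⟩
    refine ⟨h1.symm, ?_⟩
    unfold R0 at h2 ⊢
    omega
  loopless := ⟨fun x h => h.1 rfl⟩

instance (n : ℕ) : DecidableRel (L0 n).Adj := fun x y => by
  change Decidable (x ≠ y ∧ R0 x.val y.val)
  infer_instance

def d0 (n m : ℕ) : ℕ := if m = 0 then n - 7 else if m ≤ 4 then 3 else 1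

lemma hdeg0 {n : ℕ} (hn : 12 ≤ n) (x : Fin n) :
    (L0 n).degree x = d0 n x.val := by
  have hxlt := x.isLt
  by_cases h0 : x.val = 0
  · rw [degree_eq_card _ x (Finset.Ico 7 n) (fun m hm => (Finset.mem_Ico.mp hm).2) ?_]
    · simp only [d0, h0, if_pos]
      rw [Nat.card_Ico]
    · intro j
      have hjlt := j.isLt
      change (¬x = j ∧ R0 x.val j.val) ↔ _
      simp only [Fin.ext_iff, Finset.mem_Ico]
      unfold R0
      omega
  · by_cases h4 : x.val ≤ 4
    · have hmemx : x.val ∈ ({1, 2, 3, 4} : Finset ℕ) := by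
        simp only [Finset.mem_insert, Finset.mem_singleton]
        omega
      have hSlt : ∀ m ∈ ({1, 2, 3, 4} : Finset ℕ).erase x.val, m < n := by
        intro m hm
        simp only [Finset.mem_erase, Finset.mem_insert, Finset.mem_singleton] at hm
        omega
      rw [degree_eq_card _ x (({1, 2, 3, 4} : Finset ℕ).erase x.val) hSlt ?_]
      · rw [Finset.card_erase_of_mem hmemx]
        simp only [d0]
        rw [if_neg h0, if_pos h4]
        rfl
      · intro j
        have hjlt := j.isLt
        change (¬x = j ∧ R0 x.val j.val) ↔ _
        simp only [Fin.ext_iff, Finset.mem_erase, Finset.mem_insert, Finset.mem_singleton]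
        unfold R0
        omega
    · by_cases h5 : x.val = 5
      · rw [degree_eq_card _ x ({6} : Finset ℕ) (fun m hm => by
          simp only [Finset.mem_singleton] at hm; omega) ?_]
        · rw [Finset.card_singleton]
          simp only [d0]
          rw [if_neg h0, if_neg h4]
        · intro j
          have hjlt := j.isLt
          change (¬x = j ∧ R0 x.val j.val) ↔ _
          simp only [Fin.ext_iff, Finset.mem_singleton]
          unfold R0
          omega
      · by_cases h6 : x.val = 6
        · rw [degree_eq_card _ x ({5} : Finset ℕ) (fun m hm => by
            simp only [Finset.mem_singleton] at hm; omega) ?_]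
          · rw [Finset.card_singleton]
            simp only [d0]
            rw [if_neg h0, if_neg h4]
          · intro j
            have hjlt := j.isLt
            change (¬x = j ∧ R0 x.val j.val) ↔ _
            simp only [Fin.ext_iff, Finset.mem_singleton]
            unfold R0
            omega
        · have h7 : 7 ≤ x.val := by omega
          rw [degree_eq_card _ x ({0} : Finset ℕ) (fun m hm => by
            simp only [Finset.mem_singleton] at hm; omega) ?_]
          · rw [Finset.card_singleton]
            simp only [d0]
            rw [if_neg h0, if_neg h4]
          · intro j
            have hjlt := j.isLt
            change (¬x = j ∧ R0 x.val j.val) ↔ _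
            simp only [Fin.ext_iff, Finset.mem_singleton]
            unfold R0
            omega

lemma sum_d0 {n : ℕ} (hn : 12 ≤ n) : ∑ m ∈ Finset.range n, d0 n m = 2 * n := by
  have hsplit : ∑ m ∈ Finset.range n, d0 n m =
      (∑ m ∈ Finset.Ico 0 7, d0 n m) + ∑ m ∈ Finset.Ico 7 n, d0 n m := by
    rw [Finset.sum_Ico_consecutive _ (by omega) (by omega), Finset.range_eq_Ico]
  have h1 : ∑ m ∈ Finset.Ico 0 7, d0 n m = (n - 7) + 14 := by
    rw [show Finset.Ico 0 7 = Finset.range 7 from (Finset.range_eq_Ico 7).symm]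
    simp [Finset.sum_range_succ, d0]
  have h2 : ∀ m ∈ Finset.Ico 7 n, d0 n m = 1 := by
    intro m hm
    simp only [Finset.mem_Ico] at hm
    simp only [d0]
    rw [if_neg (by omega), if_neg (by omega)]
  rw [hsplit, Finset.sum_congr rfl h2, Finset.sum_const, Nat.card_Ico, smul_eq_mul, h1]
  omega

lemma edge0 {n : ℕ} (hn : 12 ≤ n) :
    2 * ((L0 n)ᶜ.edgeFinset.card) + 2 * n = n * (n - 1) := by
  have hd := SimpleGraph.sum_degrees_eq_twice_card_edges (L0 n)
  have hsum : ∑ v : Fin n, (L0 n).degree v = ∑ m ∈ Finset.range n, d0 n m := by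
    rw [Finset.sum_congr rfl (fun x _ => hdeg0 hn x)]
    exact Fin.sum_univ_eq_sum_range (d0 n) n
  have hS := sum_d0 (n := n) hn
  have hdc := double_count (L0 n)
  omega

theorem case0 {n : ℕ} (hn : 7 ≤ n) (h6 : n % 6 = 0) :
    ∃ G : SimpleGraph (Fin n), KkDivisible 3 G ∧
      ((G.edgeSet.ncard : ℚ) = (n : ℚ) * ((n : ℚ) - 1) / 2 - eBound n) ∧
      ¬ HasKkDecomposition 3 G := by
  have hn12 : 12 ≤ n := by omega
  have hE := edge0 hn12
  have hEn : (L0 n)ᶜ.edgeSet.ncard = (L0 n)ᶜ.edgeFinset.card := ncard_edgeSet _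
  refine ⟨(L0 n)ᶜ, ⟨?_, ?_⟩, ?_, ?_⟩
  · show (3 * (3 - 1) / 2 : ℕ) ∣ _
    rw [hEn]
    obtain ⟨k, hk⟩ : ∃ k, n = 6 * k := ⟨n / 6, by omega⟩
    obtain ⟨m, hm⟩ : ∃ m, n - 1 = m := ⟨_, rfl⟩
    have hnn : n * (n - 1) = 6 * (k * m) := by
      rw [hm, hk]; ring
    omega
  · intro x
    show (3 - 1 : ℕ) ∣ _
    rw [ncard_neighborSet]
    have hda := deg_compl_add (L0 n) x
    have hld := hdeg0 hn12 x
    have heven : n % 2 = 0 := by omega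
    have hv : d0 n x.val = n - 7 ∨ d0 n x.val = 1 ∨ d0 n x.val = 3 := by
      unfold d0; split_ifs <;> tauto
    omega
  · rw [hEn]
    have hcast := congrArg (Nat.cast (R := ℚ)) hE
    push_cast [Nat.cast_sub (show 1 ≤ n by omega)] at hcast
    rw [eBound, if_neg (by omega), if_neg (by omega), if_pos h6]
    linarith
  · have h7 : (7 : ℕ) ≤ n := hn
    have hr01 : ¬ R0 0 1 := by decide
    have hr02 : ¬ R0 0 2 := by decide
    have hr03 : ¬ R0 0 3 := by decide
    have hr05 : ¬ R0 0 5 := by decide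
    have hr06 : ¬ R0 0 6 := by decide
    refine no_decomp _ ⟨0, by omega⟩ ⟨1, by omega⟩ ⟨2, by omega⟩ ⟨3, by omega⟩ ⟨4, by omega⟩
      ⟨5, by omega⟩ ⟨6, by omega⟩ ?_ ?_ ?_ ?_ ?_ ?_ ?_ ?_ ?_ ?_ ?_ ?_ ?_ ?_ ?_ ?_ ?_ ?_ ?_ ?_ ?_
    · exact (SimpleGraph.compl_adj _ _ _).mpr
        ⟨Fin.ne_of_val_ne (by norm_num), fun h => hr01 h.2⟩
    · exact (SimpleGraph.compl_adj _ _ _).mpr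
        ⟨Fin.ne_of_val_ne (by norm_num), fun h => hr02 h.2⟩
    · exact (SimpleGraph.compl_adj _ _ _).mpr
        ⟨Fin.ne_of_val_ne (by norm_num), fun h => hr03 h.2⟩
    · exact (SimpleGraph.compl_adj _ _ _).mpr
        ⟨Fin.ne_of_val_ne (by norm_num), fun h => hr05 h.2⟩
    · exact (SimpleGraph.compl_adj _ _ _).mpr
        ⟨Fin.ne_of_val_ne (by norm_num), fun h => hr06 h.2⟩
    · intro h
      rw [SimpleGraph.compl_adj] at h
      exact h.2 ⟨h.1, (by decide : R0 1 2)⟩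
    · intro h
      rw [SimpleGraph.compl_adj] at h
      exact h.2 ⟨h.1, (by decide : R0 1 3)⟩
    · intro h
      rw [SimpleGraph.compl_adj] at h
      exact h.2 ⟨h.1, (by decide : R0 2 3)⟩
    · intro h
      rw [SimpleGraph.compl_adj] at h
      exact h.2 ⟨h.1, (by decide : R0 1 4)⟩
    · intro h
      rw [SimpleGraph.compl_adj] at h
      exact h.2 ⟨h.1, (by decide : R0 2 4)⟩
    · intro h
      rw [SimpleGraph.compl_adj] at h
      exact h.2 ⟨h.1, (by decide : R0 3 4)⟩
    · exact Fin.ne_of_val_ne (by norm_num)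
    · exact Fin.ne_of_val_ne (by norm_num)
    · exact Fin.ne_of_val_ne (by norm_num)
    · exact Fin.ne_of_val_ne (by norm_num)
    · exact Fin.ne_of_val_ne (by norm_num)
    · exact Fin.ne_of_val_ne (by norm_num)
    · exact Fin.ne_of_val_ne (by norm_num)
    · exact Fin.ne_of_val_ne (by norm_num)
    · exact Fin.ne_of_val_ne (by norm_num)
    · intro t ht
      rw [SimpleGraph.compl_adj] at ht
      obtain ⟨hne, hnadj⟩ := ht
      have htlt := t.isLt
      have ht0 : t.val ≠ 0 := fun h0 => hne (Fin.ext (by simpa using h0.symm))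
      have hval : t.val = 1 ∨ t.val = 2 ∨ t.val = 3 ∨ t.val = 4 ∨ t.val = 5 ∨ t.val = 6 := by
        by_contra hcon
        exact hnadj ⟨hne, Or.inl ⟨rfl, by omega⟩⟩
      rcases hval with h | h | h | h | h | h
      · exact Or.inl (Fin.ext (by simpa using h.symm)).symm
      · exact Or.inr (Or.inl (Fin.ext (by simpa using h.symm)).symm)
      · exact Or.inr (Or.inr (Or.inl (Fin.ext (by simpa using h.symm)).symm))
      · exact Or.inr (Or.inr (Or.inr (Or.inl (Fin.ext (by simpa using h.symm)).symm)))
      · exact Or.inr (Or.inr (Or.inr (Or.inr (Or.inl (Fin.ext (by simpa using h.symm)).symm))))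
      · exact Or.inr (Or.inr (Or.inr (Or.inr (Or.inr (Fin.ext (by simpa using h.symm)).symm))))

end Case0

/-- For each `n ≥ 7` there is a `K_3`-divisible graph of order `n` with exactly
`C(n,2) - e(n)` edges that has no `K_3`-decomposition. -/
theorem nondecomposable_K3_extremal (n : ℕ) (hn : 7 ≤ n) :
    ∃ G : SimpleGraph (Fin n), KkDivisible 3 G ∧
      ((G.edgeSet.ncard : ℚ) = (n : ℚ) * ((n : ℚ) - 1) / 2 - eBound n) ∧
      ¬ HasKkDecomposition 3 G := by
  have h : n % 6 = 0 ∨ (n % 6 = 1 ∨ n % 6 = 3) ∨ (n % 6 = 2 ∨ n % 6 = 4) ∨ n % 6 = 5 := by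
    omega
  rcases h with h | h | h | h
  · exact case0 hn h
  · exact case13 hn h
  · exact case24 hn h
  · exact case5 hn h
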